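/- Let N ≥ 1 and let U ⊆ ℝ^N be open. Let a, b, c : U → ℝ and μ¹, …, μ^N, λ¹, …, λ^N : U → ℝ be C¹ functions such that for every index i and every point of U one has ∂_i b = μ^i ∂_i a and ∂_i c = λ^i ∂_i a (here ∂_i denotes the partial derivative in the i-th coordinate R^i of U). Let f₁₁, f₂₂, f₃₃, f₁₂, f₁₃, f₂₃ : ℝ³ → ℝ be functions such that for every R ∈ U and every i the dispersion relation f₁₁ + f₂₂ (μ^i)² + f₃₃ (λ^i)² + 2 f₁₂ μ^i + 2 f₁₃ λ^i + 2 f₂₃ μ^i λ^i = 0 holds, where μ^i, λ^i are evaluated at R and the f's are evaluated at (a(R), b(R), c(R)). Let Ω ⊆ ℝ³ be open (with coordinates x, y, t) and let R = (R¹, …, R^N) : Ω → U be C¹ with R^i_y = μ^i(R) R^i_x and R^i_t = λ^i(R) R^i_x on Ω for every i. Then the functions A = a∘R, B = b∘R, C = c∘R satisfy on Ω: A_y = B_x, A_t = C_x, B_t = C_y, and f₁₁(A,B,C) A_x + f₂₂(A,B,C) B_y + f₃₃(A,B,C) C_t + 2 f₁₂(A,B,C) A_y + 2 f₁₃(A,B,C)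 A_t + 2 f₂₃(A,B,C) B_t = 0. -/

import Mathlib

/-- Partial derivative of `f : ℝⁿ → ℝ` in the `i`-th coordinate direction. -/
noncomputable def pd {n : ℕ} (i : Fin n) (f : (Fin n → ℝ) → ℝ) (x : Fin n → ℝ) : ℝ :=
  fderiv ℝ f x (Pi.single i 1)

/-- Any N-phase ansatz whose characteristic speeds satisfy the dispersion relation
produces solutions of the quasilinear system equivalent to the second-order PDE
`f₁₁ u_xx + f₂₂ u_yy + f₃₃ u_tt + 2 f₁₂ u_xy + 2 f₁₃ u_xt + 2 f₂₃ u_yt = 0`.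
Coordinates on `ℝ³` are `x = 0`, `y = 1`, `t = 2`. -/
theorem hydrodynamic_reductions_solve_quasilinear_system
    {N : ℕ} (hN : 1 ≤ N) (U : Set (Fin N → ℝ)) (hU : IsOpen U)
    (a b c : (Fin N → ℝ) → ℝ) (μ lam : Fin N → (Fin N → ℝ) → ℝ)
    (ha : ContDiffOn ℝ 1 a U) (hb : ContDiffOn ℝ 1 b U) (hc : ContDiffOn ℝ 1 c U)
    (hμ : ∀ i, ContDiffOn ℝ 1 (μ i) U) (hlam : ∀ i, ContDiffOn ℝ 1 (lam i) U)
    (hba : ∀ i : Fin N, ∀ R ∈ U, pd i b R = μ i R * pd i a R)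
    (hca : ∀ i : Fin N, ∀ R ∈ U, pd i c R = lam i R * pd i a R)
    (f11 f22 f33 f12 f13 f23 : ℝ → ℝ → ℝ → ℝ)
    (hdisp : ∀ R ∈ U, ∀ i : Fin N,
      f11 (a R) (b R) (c R)
        + f22 (a R) (b R) (c R) * (μ i R) ^ 2
        + f33 (a R) (b R) (c R) * (lam i R) ^ 2
        + 2 * f12 (a R) (b R) (c R) * μ i R
        + 2 * f13 (a R) (b R) (c R) * lam i R
        + 2 * f23 (a R) (b R) (c R) * μ i R * lam i R = 0)
    (Ω : Set (Fin 3 → ℝ)) (hΩ : IsOpen Ω)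
    (R : (Fin 3 → ℝ) → (Fin N → ℝ)) (hR : ContDiffOn ℝ 1 R Ω)
    (hRU : ∀ X ∈ Ω, R X ∈ U)
    (hRy : ∀ i : Fin N, ∀ X ∈ Ω,
      pd 1 (fun Y => R Y i) X = μ i (R X) * pd 0 (fun Y => R Y i) X)
    (hRt : ∀ i : Fin N, ∀ X ∈ Ω,
      pd 2 (fun Y => R Y i) X = lam i (R X) * pd 0 (fun Y => R Y i) X) :
    ∀ X ∈ Ω,
      pd 1 (a ∘ R) X = pd 0 (b ∘ R) X ∧
      pd 2 (a ∘ R) X = pd 0 (c ∘ R) X ∧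
      pd 2 (b ∘ R) X = pd 1 (c ∘ R) X ∧
      f11 (a (R X)) (b (R X)) (c (R X)) * pd 0 (a ∘ R) X
        + f22 (a (R X)) (b (R X)) (c (R X)) * pd 1 (b ∘ R) X
        + f33 (a (R X)) (b (R X)) (c (R X)) * pd 2 (c ∘ R) X
        + 2 * f12 (a (R X)) (b (R X)) (c (R X)) * pd 1 (a ∘ R) X
        + 2 * f13 (a (R X)) (b (R X)) (c (R X)) * pd 2 (a ∘ R) X
        + 2 * f23 (a (R X)) (b (R X)) (c (R X)) * pd 2 (b ∘ R) X = 0 := by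

  intro X hX
  have hXU : R X ∈ U := hRU X hX
  have hRd : DifferentiableAt ℝ R X :=
    (hR.differentiableOn one_ne_zero).differentiableAt (hΩ.mem_nhds hX)
  have hUn : U ∈ nhds (R X) := hU.mem_nhds hXU
  have had : DifferentiableAt ℝ a (R X) :=
    (ha.differentiableOn one_ne_zero).differentiableAt hUn
  have hbd : DifferentiableAt ℝ b (R X) :=
    (hb.differentiableOn one_ne_zero).differentiableAt hUn
  have hcd : DifferentiableAt ℝ c (R X) :=
    (hc.differentiableOn one_ne_zero).differentiableAt hUn
  set v : Fin 3 → (Fin N → ℝ) := fun k => fderiv ℝ R X (Pi.single k 1) with hv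
  have hproj : ∀ (k : Fin 3) (i : Fin N), pd k (fun Y => R Y i) X = v k i := by
    intro k i
    have h : HasFDerivAt (fun Y => R Y i)
        ((ContinuousLinearMap.proj (R := ℝ) (φ := fun _ : Fin N => ℝ) i).comp
          (fderiv ℝ R X)) X :=
      (ContinuousLinearMap.proj (R := ℝ) (φ := fun _ : Fin N => ℝ) i).hasFDerivAt.comp
        X hRd.hasFDerivAt
    simp [pd, h.fderiv, hv]
  have hchain : ∀ (g : (Fin N → ℝ) → ℝ), DifferentiableAt ℝ g (R X) → ∀ k : Fin 3,
      pd k (g ∘ R) X = ∑ i, v k i * pd i g (R X) := by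
    intro g hg k
    have h1 : fderiv ℝ (g ∘ R) X = (fderiv ℝ g (R X)).comp (fderiv ℝ R X) :=
      fderiv_comp X hg hRd
    have h2 : v k = ∑ i, v k i • (Pi.single i 1 : Fin N → ℝ) := by
      funext j
      simp [Finset.sum_apply, Pi.single_apply, mul_comm]
    calc pd k (g ∘ R) X = fderiv ℝ g (R X) (v k) := by rw [pd, h1]; rfl
      _ = fderiv ℝ g (R X) (∑ i, v k i • (Pi.single i 1 : Fin N → ℝ)) := by rw [← h2]
      _ = ∑ i, v k i * pd i g (R X) := by
          rw [map_sum]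
          simp [pd, smul_eq_mul]
  have hv1 : ∀ i, v 1 i = μ i (R X) * v 0 i := by
    intro i
    have h := hRy i X hX
    rwa [hproj, hproj] at h
  have hv2 : ∀ i, v 2 i = lam i (R X) * v 0 i := by
    intro i
    have h := hRt i X hX
    rwa [hproj, hproj] at h
  refine ⟨?_, ?_, ?_, ?_⟩
  · rw [hchain a had 1, hchain b hbd 0]
    refine Finset.sum_congr rfl fun i _ => ?_
    rw [hv1 i, hba i (R X) hXU]; ring
  · rw [hchain a had 2, hchain c hcd 0]
    refine Finset.sum_congr rfl fun i _ => ?_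
    rw [hv2 i, hca i (R X) hXU]; ring
  · rw [hchain b hbd 2, hchain c hcd 1]
    refine Finset.sum_congr rfl fun i _ => ?_
    rw [hv2 i, hv1 i, hba i (R X) hXU, hca i (R X) hXU]; ring
  · rw [hchain a had 0, hchain b hbd 1, hchain c hcd 2, hchain a had 1,
      hchain a had 2, hchain b hbd 2]
    simp only [Finset.mul_sum, ← Finset.sum_add_distrib]
    refine Finset.sum_eq_zero fun i _ => ?_
    rw [hv1 i, hv2 i, hba i (R X) hXU, hca i (R X) hXU]
    linear_combination (v 0 i * pd i a (R X)) * hdisp (R X) hXU i
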